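/- Let ε = ±1 and a > 0, P = (x,y,z) with y²+z² > 0 and Q := x² + ε(y²+z²) > 0 (and x/√Q in the domain of arcC). Suppose (1/4)·(log Q)² + arcC(x/√Q)² > 0 and (1/4)·(log(Q/a²))² + arcC(x/√Q)² > 0 (i.e. P ≠ A₁ and P ≠ A₂ under the isometry T_P). Then the cosine of the angle at P between the translation curves to A₁ = (1,1,0,0) and A₂ = (1,a,0,0) equals [(1/4)·log(1/Q)·log(a²/Q) + A²] / √[((1/4)(log Q)² + A²)·((1/4)(log(Q/a²))² + A²)], where A = arcC(x/√Q); in particular this cosine equals 0 iff (1/4)·log(1/Q)·log(a²/Q) + A² = 0. -/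

import Mathlib

open Real

noncomputable def arcosh (x : ℝ) : ℝ := Real.log (x + Real.sqrt (x ^ 2 - 1))

noncomputable def arcC (ε x : ℝ) : ℝ := if ε = 1 then Real.arccos x else _root_.arcosh x

theorem cosine_of_angle_at_P_fibre_segment (ε a x y z : ℝ)
    (hε : ε = 1 ∨ ε = -1) (ha : 0 < a)
    (hyz : 0 < y ^ 2 + z ^ 2)
    (Q : ℝ) (hQdef : Q = x ^ 2 + ε * (y ^ 2 + z ^ 2)) (hQ : 0 < Q)
    (A : ℝ) (hA : A = arcC ε (x / Real.sqrt Q))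
    (hP1 : 0 < (Real.log Q) ^ 2 / 4 + A ^ 2)
    (hP2 : 0 < (Real.log (Q / a ^ 2)) ^ 2 / 4 + A ^ 2)
    (t₁ t₂ : ℝ × ℝ × ℝ)
    (ht₁ : t₁ = (Real.log (1 / Q) / 2,
                 -(y / Real.sqrt (y ^ 2 + z ^ 2)) * A,
                 -(z / Real.sqrt (y ^ 2 + z ^ 2)) * A))
    (ht₂ : t₂ = (Real.log (a ^ 2 / Q) / 2,
                 -(y / Real.sqrt (y ^ 2 + z ^ 2)) * A,
                 -(z / Real.sqrt (y ^ 2 + z ^ 2)) * A)) :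
    (t₁.1 * t₂.1 + t₁.2.1 * t₂.2.1 + t₁.2.2 * t₂.2.2) /
        (Real.sqrt (t₁.1 ^ 2 + t₁.2.1 ^ 2 + t₁.2.2 ^ 2) *
         Real.sqrt (t₂.1 ^ 2 + t₂.2.1 ^ 2 + t₂.2.2 ^ 2))
      = (Real.log (1 / Q) * Real.log (a ^ 2 / Q) / 4 + A ^ 2) /
          Real.sqrt (((Real.log Q) ^ 2 / 4 + A ^ 2) *
                     ((Real.log (Q / a ^ 2)) ^ 2 / 4 + A ^ 2)) ∧
    ((Real.log (1 / Q) * Real.log (a ^ 2 / Q) / 4 + A ^ 2) /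
          Real.sqrt (((Real.log Q) ^ 2 / 4 + A ^ 2) *
                     ((Real.log (Q / a ^ 2)) ^ 2 / 4 + A ^ 2)) = 0 ↔
      Real.log (1 / Q) * Real.log (a ^ 2 / Q) / 4 + A ^ 2 = 0) := by
  subst ht₁ ht₂
  have hs : 0 < Real.sqrt (y ^ 2 + z ^ 2) := Real.sqrt_pos.mpr hyz
  have hs2 : Real.sqrt (y ^ 2 + z ^ 2) ^ 2 = y ^ 2 + z ^ 2 := Real.sq_sqrt hyz.le
  have key : (y / Real.sqrt (y ^ 2 + z ^ 2)) ^ 2 + (z / Real.sqrt (y ^ 2 + z ^ 2)) ^ 2 = 1 := by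
    field_simp
    exact hs2.symm
  have h1 : Real.log (1 / Q) = -Real.log Q := by
    rw [one_div, Real.log_inv]
  have h2 : Real.log (a ^ 2 / Q) = -Real.log (Q / a ^ 2) := by
    rw [Real.log_div (by positivity) hQ.ne', Real.log_div hQ.ne' (by positivity)]
    ring
  have hden : 0 < ((Real.log Q) ^ 2 / 4 + A ^ 2) * ((Real.log (Q / a ^ 2)) ^ 2 / 4 + A ^ 2) :=
    mul_pos hP1 hP2
  have hsden : 0 < Real.sqrt (((Real.log Q) ^ 2 / 4 + A ^ 2) *
      ((Real.log (Q / a ^ 2)) ^ 2 / 4 + A ^ 2)) := Real.sqrt_pos.mpr hden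
  constructor
  · simp only
    have e1 : (Real.log (1 / Q) / 2) ^ 2 + (-(y / Real.sqrt (y ^ 2 + z ^ 2)) * A) ^ 2 +
        (-(z / Real.sqrt (y ^ 2 + z ^ 2)) * A) ^ 2 = (Real.log Q) ^ 2 / 4 + A ^ 2 := by
      have : (-(y / Real.sqrt (y ^ 2 + z ^ 2)) * A) ^ 2 +
          (-(z / Real.sqrt (y ^ 2 + z ^ 2)) * A) ^ 2 =
          ((y / Real.sqrt (y ^ 2 + z ^ 2)) ^ 2 + (z / Real.sqrt (y ^ 2 + z ^ 2)) ^ 2) * A ^ 2 := by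
        ring
      rw [add_assoc, this, key, h1]
      ring
    have e2 : (Real.log (a ^ 2 / Q) / 2) ^ 2 + (-(y / Real.sqrt (y ^ 2 + z ^ 2)) * A) ^ 2 +
        (-(z / Real.sqrt (y ^ 2 + z ^ 2)) * A) ^ 2 = (Real.log (Q / a ^ 2)) ^ 2 / 4 + A ^ 2 := by
      have : (-(y / Real.sqrt (y ^ 2 + z ^ 2)) * A) ^ 2 +
          (-(z / Real.sqrt (y ^ 2 + z ^ 2)) * A) ^ 2 =
          ((y / Real.sqrt (y ^ 2 + z ^ 2)) ^ 2 + (z / Real.sqrt (y ^ 2 + z ^ 2)) ^ 2) * A ^ 2 := by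
        ring
      rw [add_assoc, this, key, h2]
      ring
    have e3 : Real.log (1 / Q) / 2 * (Real.log (a ^ 2 / Q) / 2) +
        -(y / Real.sqrt (y ^ 2 + z ^ 2)) * A * (-(y / Real.sqrt (y ^ 2 + z ^ 2)) * A) +
        -(z / Real.sqrt (y ^ 2 + z ^ 2)) * A * (-(z / Real.sqrt (y ^ 2 + z ^ 2)) * A) =
        Real.log (1 / Q) * Real.log (a ^ 2 / Q) / 4 + A ^ 2 := by
      have : -(y / Real.sqrt (y ^ 2 + z ^ 2)) * A * (-(y / Real.sqrt (y ^ 2 + z ^ 2)) * A) +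
          -(z / Real.sqrt (y ^ 2 + z ^ 2)) * A * (-(z / Real.sqrt (y ^ 2 + z ^ 2)) * A) =
          ((y / Real.sqrt (y ^ 2 + z ^ 2)) ^ 2 + (z / Real.sqrt (y ^ 2 + z ^ 2)) ^ 2) * A ^ 2 := by
        ring
      rw [add_assoc, this, key]
      ring
    rw [e1, e2, e3, ← Real.sqrt_mul hP1.le]
  · constructor
    · intro h
      exact (div_eq_zero_iff.mp h).resolve_right hsden.ne'
    · intro h
      rw [h, zero_div]
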